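/- Let R be a ring and n ≥ 1 an integer. R is a CN ring if and only if D_n(R) is a CN ring, where D_n(R) is the subring of M_n(R) consisting of all upper triangular n×n matrices whose diagonal entries are all equal; here the CN-decomposition in D_n(R) is taken with respect to the center of D_n(R) and nilpotent elements of D_n(R). -/

import Mathlib

/-- An element of a ring has a *CN-decomposition* if it is a sum of a central
element and a nilpotent element. -/
def HasCNDecomp {R : Type*} [Ring R] (a : R) : Prop :=
  ∃ c n : R, c ∈ Set.center R ∧ IsNilpotent n ∧ a = c + n

/-- A ring is a *CN ring* if every element has a CN-decomposition. -/
def IsCNRing (R : Type*) [Ring R] : Prop := ∀ a : R, HasCNDecomp a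

/-- `Dₙ(R)`: the subring of `Mₙ(R)` of upper triangular matrices all of whose
diagonal entries are equal. -/
def Dn (R : Type*) [Ring R] (n : ℕ) : Subring (Matrix (Fin n) (Fin n) R) where
  carrier := {A | (∀ i j : Fin n, j < i → A i j = 0) ∧ ∀ i j, A i i = A j j}
  zero_mem' := ⟨fun _ _ _ => rfl, fun _ _ => rfl⟩
  one_mem' := ⟨fun i j h => Matrix.one_apply_ne (Ne.symm (ne_of_lt h)), by
    simp [Matrix.one_apply]⟩
  add_mem' := by
    rintro A B ⟨hA1, hA2⟩ ⟨hB1, hB2⟩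
    exact ⟨fun i j h => by simp [Matrix.add_apply, hA1 i j h, hB1 i j h],
      fun i j => by simp [Matrix.add_apply, hA2 i j, hB2 i j]⟩
  neg_mem' := by
    rintro A ⟨hA1, hA2⟩
    exact ⟨fun i j h => by simp [Matrix.neg_apply, hA1 i j h],
      fun i j => by simp [Matrix.neg_apply, hA2 i j]⟩
  mul_mem' := by
    rintro A B ⟨hA1, hA2⟩ ⟨hB1, hB2⟩
    constructor
    · intro i j h
      rw [Matrix.mul_apply]
      apply Finset.sum_eq_zero
      intro m _
      rcases lt_or_ge m i with hm | hm
      · rw [hA1 i m hm, zero_mul]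
      · rw [hB1 m j (lt_of_lt_of_le h hm), mul_zero]
    · intro i j
      have key : ∀ k : Fin n, (A * B) k k = A k k * B k k := by
        intro k
        rw [Matrix.mul_apply]
        apply Finset.sum_eq_single
        · intro m _ hm
          rcases hm.lt_or_gt with h | h
          · rw [hA1 k m h, zero_mul]
          · rw [hB1 m k h, mul_zero]
        · intro hk
          exact absurd (Finset.mem_univ k) hk
      rw [key i, key j, hA2 i j, hB2 i j]


section Aux
variable {R : Type*} [Ring R] {n : ℕ}

/-- Upper triangular predicate. -/
def UT (A : Matrix (Fin n) (Fin n) R) : Prop := ∀ i j : Fin n, j < i → A i j = 0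

lemma UT.one : UT (1 : Matrix (Fin n) (Fin n) R) :=
  fun _ _ h => Matrix.one_apply_ne (Ne.symm (ne_of_lt h))

lemma UT.mul {A B : Matrix (Fin n) (Fin n) R} (hA : UT A) (hB : UT B) : UT (A * B) := by
  intro i j h
  rw [Matrix.mul_apply]
  apply Finset.sum_eq_zero
  intro m _
  rcases lt_or_ge m i with hm | hm
  · rw [hA i m hm, zero_mul]
  · rw [hB m j (lt_of_lt_of_le h hm), mul_zero]

lemma UT.diag_mul {A B : Matrix (Fin n) (Fin n) R} (hA : UT A) (hB : UT B) (i : Fin n) :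
    (A * B) i i = A i i * B i i := by
  rw [Matrix.mul_apply]
  apply Finset.sum_eq_single
  · intro m _ hm
    rcases hm.lt_or_gt with h | h
    · rw [hA i m h, zero_mul]
    · rw [hB m i h, mul_zero]
  · intro hk
    exact absurd (Finset.mem_univ i) hk

lemma UT.pow {A : Matrix (Fin n) (Fin n) R} (hA : UT A) (p : ℕ) : UT (A ^ p) := by
  induction p with
  | zero => simpa using UT.one
  | succ p ih => rw [pow_succ]; exact ih.mul hA

lemma UT.diag_pow {A : Matrix (Fin n) (Fin n) R} (hA : UT A) (p : ℕ) (i : Fin n) :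
    (A ^ p) i i = (A i i) ^ p := by
  induction p with
  | zero => simp [Matrix.one_apply]
  | succ p ih => rw [pow_succ, (hA.pow p).diag_mul hA, ih, pow_succ]

lemma UT.nilpotent {A : Matrix (Fin n) (Fin n) R} (hA : UT A) {k : ℕ}
    (hk : ∀ i, (A i i) ^ k = 0) : A ^ ((n + 1) * k) = 0 := by
  have main : ∀ d : ℕ, ∀ i j : Fin n, (j : ℕ) ≤ (i : ℕ) + d → (A ^ ((d + 1) * k)) i j = 0 := by
    intro d
    induction d with
    | zero =>
      intro i j hj
      simp only [Nat.zero_add, one_mul]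
      rcases lt_or_eq_of_le (Fin.le_def.mpr (by simpa using hj)) with h | h
      · exact (hA.pow k) i j h
      · rw [h, hA.diag_pow k i, hk i]
    | succ d ih =>
      intro i j hj
      have : (d + 1 + 1) * k = (d + 1) * k + k := by ring
      rw [this, pow_add, Matrix.mul_apply]
      apply Finset.sum_eq_zero
      intro l _
      rcases le_or_gt (l : ℕ) ((i : ℕ) + d) with hl | hl
      · rw [ih i l hl, zero_mul]
      · have hjl : j ≤ l := Fin.le_def.mpr (le_trans hj hl)
        rcases lt_or_eq_of_le hjl with h | h
        · rw [(hA.pow k) l j h, mul_zero]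
        · rw [h, hA.diag_pow k l, hk l, mul_zero]
  ext i j
  have : (j : ℕ) ≤ (i : ℕ) + n := le_trans (le_of_lt j.isLt) (Nat.le_add_left n i)
  simpa using main n i j this

lemma diag_mem_Dn (c : R) : Matrix.diagonal (fun _ : Fin n => c) ∈ Dn R n :=
  ⟨fun i j h => Matrix.diagonal_apply_ne _ (Ne.symm (ne_of_lt h)), fun i j => by simp⟩

end Aux

/-- For `n ≥ 1`, `R` is a CN ring iff `Dₙ(R)` is a CN ring. -/
theorem isCNRing_iff_Dn {R : Type*} [Ring R] (n : ℕ) (hn : 1 ≤ n) :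
    IsCNRing R ↔ IsCNRing (Dn R n) := by
  have i0 : Fin n := ⟨0, hn⟩
  constructor
  · -- forward
    intro hR a
    obtain ⟨A, hA⟩ := a
    obtain ⟨c, m, hc, ⟨k, hk⟩, hd⟩ := hR (A i0 i0)
    set C : Matrix (Fin n) (Fin n) R := Matrix.diagonal (fun _ => c) with hCdef
    refine ⟨⟨C, diag_mem_Dn c⟩, ⟨A, hA⟩ - ⟨C, diag_mem_Dn c⟩, ?_, ?_, by abel⟩
    · rw [Semigroup.mem_center_iff]
      intro g
      apply Subtype.ext
      show (g : Matrix (Fin n) (Fin n) R) * C = C * (g : Matrix (Fin n) (Fin n) R)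
      ext i j
      simp only [hCdef, Matrix.mul_diagonal, Matrix.diagonal_mul]
      exact Semigroup.mem_center_iff.mp hc _
    · refine ⟨(n + 1) * k, ?_⟩
      apply Subtype.ext
      push_cast
      show ((A - C : Matrix (Fin n) (Fin n) R)) ^ ((n + 1) * k) = 0
      have hUT : UT (A - C) := by
        intro i j h
        have := hA.1 i j h
        simp [hCdef, this, Matrix.diagonal_apply_ne _ (Ne.symm (ne_of_lt h))]
      apply hUT.nilpotent
      intro i
      have : (A - C) i i = m := by
        have h1 : A i i = A i0 i0 := hA.2 i i0
        simp [hCdef, h1, hd]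
      rw [this, hk]
  · -- backward
    intro hD a
    obtain ⟨Cel, Nel, hc, ⟨K, hK⟩, heq⟩ :=
      hD ⟨Matrix.diagonal (fun _ => a), diag_mem_Dn a⟩
    refine ⟨(Cel : Matrix (Fin n) (Fin n) R) i0 i0, (Nel : Matrix (Fin n) (Fin n) R) i0 i0,
      ?_, ?_, ?_⟩
    · rw [Semigroup.mem_center_iff]
      intro r
      have := Semigroup.mem_center_iff.mp hc ⟨Matrix.diagonal (fun _ => r), diag_mem_Dn r⟩
      have h2 := congrArg (fun X : Dn R n => (X : Matrix (Fin n) (Fin n) R) i0 i0) this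
      simpa [Matrix.mul_diagonal, Matrix.diagonal_mul] using h2
    · refine ⟨K, ?_⟩
      have h2 : ((Nel : Matrix (Fin n) (Fin n) R)) ^ K = 0 := by
        have := congrArg (fun X : Dn R n => (X : Matrix (Fin n) (Fin n) R)) hK
        simpa using this
      have hUT : UT (Nel : Matrix (Fin n) (Fin n) R) := Nel.2.1
      rw [← hUT.diag_pow K i0, h2]
      simp
    · have h2 := congrArg (fun X : Dn R n => (X : Matrix (Fin n) (Fin n) R) i0 i0) heq
      simpa using h2
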